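/- Entropy derivative of thermal states: for a Hermitian H on C^d, the entropy S(β) = −tr(ρ_β log ρ_β) of the thermal state ρ_β = e^{−βH}/tr(e^{−βH}) is differentiable in β ∈ ℝ with dS/dβ = −β·Var_β(H). -/

import Mathlib

open scoped Kronecker ComplexOrder
open Matrix

noncomputable def matfun {n : Type*} [Fintype n] [DecidableEq n] (f : ℝ → ℝ)
    (A : Matrix n n ℂ) : Matrix n n ℂ :=
  if h : A.IsHermitian then
    (h.eigenvectorUnitary : Matrix n n ℂ) * Matrix.diagonal (fun i => (f (h.eigenvalues i) : ℂ)) *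
      (star (h.eigenvectorUnitary : Matrix n n ℂ))
  else 0

noncomputable def mlog {n : Type*} [Fintype n] [DecidableEq n] (A : Matrix n n ℂ) : Matrix n n ℂ :=
  matfun Real.log A

noncomputable def mexp {n : Type*} [Fintype n] [DecidableEq n] (β : ℝ) (H : Matrix n n ℂ) : Matrix n n ℂ :=
  matfun (fun x => Real.exp (-β * x)) H

noncomputable def gibbs {n : Type*} [Fintype n] [DecidableEq n] (β : ℝ) (H : Matrix n n ℂ) : Matrix n n ℂ :=
  ((mexp β H).trace)⁻¹ • mexp β H

noncomputable def entropy {n : Type*} [Fintype n] [DecidableEq n] (ρ : Matrix n n ℂ) : ℝ :=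
  -((ρ * mlog ρ).trace).re

noncomputable def relEnt {n : Type*} [Fintype n] [DecidableEq n] (σ ρ : Matrix n n ℂ) : ℝ :=
  ((σ * (mlog σ - mlog ρ)).trace).re

def IsState {n : Type*} [Fintype n] (ρ : Matrix n n ℂ) : Prop := ρ.PosSemidef ∧ ρ.trace = 1

noncomputable def trR {a b : Type*} [Fintype a] [Fintype b]
    (ρ : Matrix (a × b) (a × b) ℂ) : Matrix a a ℂ :=
  Matrix.of fun i j => ∑ k, ρ (i, k) (j, k)

noncomputable def trL {a b : Type*} [Fintype a] [Fintype b]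
    (ρ : Matrix (a × b) (a × b) ℂ) : Matrix b b ℂ :=
  Matrix.of fun i j => ∑ k, ρ (k, i) (k, j)

noncomputable def mutInfo {a b : Type*} [Fintype a] [Fintype b] [DecidableEq a] [DecidableEq b]
    (ρ : Matrix (a × b) (a × b) ℂ) : ℝ :=
  entropy (trR ρ) + entropy (trL ρ) - entropy ρ


noncomputable def thermalVar {d : ℕ} (H : Matrix (Fin d) (Fin d) ℂ) (β : ℝ) : ℝ :=
  ((gibbs β H * (H - ((H * gibbs β H).trace) • (1 : Matrix (Fin d) (Fin d) ℂ)) ^ 2).trace).re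

lemma contOn_spec {n : Type*} [Fintype n] [DecidableEq n] (f : ℝ → ℝ) (A : Matrix n n ℂ) :
    ContinuousOn f (spectrum ℝ A) :=
  (Matrix.finite_real_spectrum (A := A)).continuousOn f

lemma matfun_eq_cfc {n : Type*} [Fintype n] [DecidableEq n] (f : ℝ → ℝ)
    {A : Matrix n n ℂ} (hA : A.IsHermitian) : matfun f A = cfc f A := by
  rw [hA.cfc_eq f, Matrix.IsHermitian.cfc, matfun, dif_pos hA]
  rfl

lemma trace_cfc' {n : Type*} [Fintype n] [DecidableEq n] (f : ℝ → ℝ)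
    {A : Matrix n n ℂ} (hA : A.IsHermitian) :
    (cfc f A).trace = ∑ i, (f (hA.eigenvalues i) : ℂ) := by
  rw [hA.cfc_eq f, Matrix.IsHermitian.cfc, Unitary.conjStarAlgAut_apply, trace_mul_cycle]
  have : (star hA.eigenvectorUnitary : Matrix n n ℂ) * hA.eigenvectorUnitary = 1 :=
    Unitary.star_mul_self_of_mem hA.eigenvectorUnitary.2
  rw [this, one_mul, trace_diagonal]
  rfl

section main
variable {d : ℕ} {H : Matrix (Fin d) (Fin d) ℂ}

noncomputable def Zf (hH : H.IsHermitian) (b : ℝ) : ℝ := ∑ i, Real.exp (-b * hH.eigenvalues i)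
noncomputable def Ef (hH : H.IsHermitian) (b : ℝ) : ℝ := ∑ i, hH.eigenvalues i * Real.exp (-b * hH.eigenvalues i)
noncomputable def Ff (hH : H.IsHermitian) (b : ℝ) : ℝ := ∑ i, (hH.eigenvalues i)^2 * Real.exp (-b * hH.eigenvalues i)

lemma mexp_cfc (hH : H.IsHermitian) (b : ℝ) : mexp b H = cfc (fun x => Real.exp (-b * x)) H :=
  matfun_eq_cfc _ hH

lemma trace_mexp (hH : H.IsHermitian) (b : ℝ) : (mexp b H).trace = (Zf hH b : ℂ) := by
  rw [mexp_cfc hH, trace_cfc' _ hH, Zf]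
  push_cast
  rfl

lemma gibbs_cfc (hH : H.IsHermitian) (b : ℝ) :
    gibbs b H = cfc (fun x => (Zf hH b)⁻¹ * Real.exp (-b * x)) H := by
  rw [gibbs, trace_mexp hH, mexp_cfc hH, ← Complex.ofReal_inv,
    cfc_const_mul _ _ _ (contOn_spec _ _)]
  rw [← algebraMap_smul ℂ ((Zf hH b)⁻¹ : ℝ)]
  rfl

lemma gibbs_isHermitian (hH : H.IsHermitian) (b : ℝ) : (gibbs b H).IsHermitian := by
  rw [gibbs_cfc hH]
  exact cfc_predicate _ H

end main

section more
variable {d : ℕ} {H : Matrix (Fin d) (Fin d) ℂ}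

lemma entropy_gibbs (hH : H.IsHermitian) (b : ℝ) :
    entropy (gibbs b H) =
      -∑ i, ((Zf hH b)⁻¹ * Real.exp (-b * hH.eigenvalues i)) *
        Real.log ((Zf hH b)⁻¹ * Real.exp (-b * hH.eigenvalues i)) := by
  have himg : ContinuousOn Real.log
      ((fun x => (Zf hH b)⁻¹ * Real.exp (-b * x)) '' spectrum ℝ H) :=
    ((Matrix.finite_real_spectrum (A := H)).image _).continuousOn _
  have hcomp : mlog (gibbs b H) =
      cfc (fun x => Real.log ((Zf hH b)⁻¹ * Real.exp (-b * x))) H := by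
    rw [mlog, matfun_eq_cfc _ (gibbs_isHermitian hH b), gibbs_cfc hH b,
      ← cfc_comp Real.log _ H hH.isSelfAdjoint himg (contOn_spec _ _)]
    rfl
  rw [entropy, hcomp, gibbs_cfc hH b,
    ← cfc_mul _ _ H (contOn_spec _ _) (contOn_spec _ _), trace_cfc' _ hH,
    ← Complex.ofReal_sum, Complex.ofReal_re]

lemma trace_H_gibbs (hH : H.IsHermitian) (b : ℝ) :
    (H * gibbs b H).trace = (((Zf hH b)⁻¹ * Ef hH b : ℝ) : ℂ) := by
  have key : H * gibbs b H =
      cfc (fun x : ℝ => x * ((Zf hH b)⁻¹ * Real.exp (-b * x))) H := by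
    rw [cfc_mul _ _ H (contOn_spec _ _) (contOn_spec _ _),
      cfc_id' ℝ H hH.isSelfAdjoint, ← gibbs_cfc hH b]
  rw [key, trace_cfc' _ hH, ← Complex.ofReal_sum, Ef, Finset.mul_sum]
  norm_num
  congr 1
  ext i
  ring

lemma thermalVar_eq (hH : H.IsHermitian) (β : ℝ) :
    thermalVar H β = ∑ i, ((Zf hH β)⁻¹ * Real.exp (-β * hH.eigenvalues i)) *
      (hH.eigenvalues i - (Zf hH β)⁻¹ * Ef hH β)^2 := by
  have h1 : H - ((H * gibbs β H).trace) • (1 : Matrix (Fin d) (Fin d) ℂ) =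
      cfc (fun x : ℝ => x - (Zf hH β)⁻¹ * Ef hH β) H := by
    rw [cfc_sub _ _ H (contOn_spec _ _) (contOn_spec _ _), cfc_id' ℝ H hH.isSelfAdjoint,
      cfc_const _ H hH.isSelfAdjoint, trace_H_gibbs hH β, Algebra.algebraMap_eq_smul_one,
      ← algebraMap_smul ℂ ((Zf hH β)⁻¹ * Ef hH β) (1 : Matrix (Fin d) (Fin d) ℂ)]
    rfl
  have key : gibbs β H * (H - ((H * gibbs β H).trace) • 1) ^ 2 =
      cfc (fun x : ℝ => ((Zf hH β)⁻¹ * Real.exp (-β * x)) *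
        (x - (Zf hH β)⁻¹ * Ef hH β)^2) H := by
    rw [h1, ← cfc_pow _ 2 H (contOn_spec _ _) hH.isSelfAdjoint, gibbs_cfc hH β,
      ← cfc_mul _ _ H (contOn_spec _ _) (contOn_spec _ _)]
  rw [thermalVar, key, trace_cfc' _ hH, ← Complex.ofReal_sum, Complex.ofReal_re]
end more

section calc2
variable {d : ℕ} {H : Matrix (Fin d) (Fin d) ℂ}

lemma Zf_pos [Nonempty (Fin d)] (hH : H.IsHermitian) (b : ℝ) : 0 < Zf hH b :=
  Finset.sum_pos (fun i _ => Real.exp_pos _) Finset.univ_nonempty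

lemma hasDerivAt_Zf (hH : H.IsHermitian) (β : ℝ) :
    HasDerivAt (Zf hH) (-Ef hH β) β := by
  have h : ∀ i ∈ Finset.univ, HasDerivAt (fun b => Real.exp (-b * hH.eigenvalues i))
      (-(hH.eigenvalues i * Real.exp (-β * hH.eigenvalues i))) β := by
    intro i _
    have h1 : HasDerivAt (fun b : ℝ => -b * hH.eigenvalues i) (-(hH.eigenvalues i)) β := by
      simpa using ((hasDerivAt_id β).neg.mul_const (hH.eigenvalues i))
    have := h1.exp
    convert this using 1
    ring
  have := HasDerivAt.sum h
  unfold Zf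
  convert this using 1
  case e'_4 => rfl
  case e'_5 => rfl
  case e'_8 => funext b; simp [Finset.sum_apply]
  rw [Ef, ← Finset.sum_neg_distrib]

lemma hasDerivAt_Ef (hH : H.IsHermitian) (β : ℝ) :
    HasDerivAt (Ef hH) (-Ff hH β) β := by
  have h : ∀ i ∈ Finset.univ,
      HasDerivAt (fun b => hH.eigenvalues i * Real.exp (-b * hH.eigenvalues i))
      (-((hH.eigenvalues i)^2 * Real.exp (-β * hH.eigenvalues i))) β := by
    intro i _
    have h1 : HasDerivAt (fun b : ℝ => -b * hH.eigenvalues i) (-(hH.eigenvalues i)) β := by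
      simpa using ((hasDerivAt_id β).neg.mul_const (hH.eigenvalues i))
    have := h1.exp.const_mul (hH.eigenvalues i)
    convert this using 1
    case e'_4 => rfl
    case e'_5 => rfl
    ring
  have := HasDerivAt.sum h
  unfold Ef
  convert this using 1
  case e'_4 => rfl
  case e'_5 => rfl
  case e'_8 => funext b; simp [Finset.sum_apply]
  rw [Ff, ← Finset.sum_neg_distrib]

lemma thermalVar_closed [Nonempty (Fin d)] (hH : H.IsHermitian) (β : ℝ) :
    thermalVar H β = (Zf hH β)⁻¹ * Ff hH β - ((Zf hH β)⁻¹ * Ef hH β)^2 := by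
  have hZ := (Zf_pos hH β).ne'
  rw [thermalVar_eq hH β]
  have expand : ∀ i, ((Zf hH β)⁻¹ * Real.exp (-β * hH.eigenvalues i)) *
      (hH.eigenvalues i - (Zf hH β)⁻¹ * Ef hH β)^2 =
      (Zf hH β)⁻¹ * ((hH.eigenvalues i)^2 * Real.exp (-β * hH.eigenvalues i))
      - (2 * ((Zf hH β)⁻¹ * Ef hH β) * (Zf hH β)⁻¹) *
          (hH.eigenvalues i * Real.exp (-β * hH.eigenvalues i))
      + (((Zf hH β)⁻¹ * Ef hH β)^2 * (Zf hH β)⁻¹) * Real.exp (-β * hH.eigenvalues i) := by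
    intro i; ring
  rw [Finset.sum_congr rfl (fun i _ => expand i), Finset.sum_add_distrib,
    Finset.sum_sub_distrib, ← Finset.mul_sum, ← Finset.mul_sum, ← Finset.mul_sum,
    show (∑ i, (hH.eigenvalues i)^2 * Real.exp (-β * hH.eigenvalues i)) = Ff hH β from rfl,
    show (∑ i, hH.eigenvalues i * Real.exp (-β * hH.eigenvalues i)) = Ef hH β from rfl,
    show (∑ i, Real.exp (-β * hH.eigenvalues i)) = Zf hH β from rfl]
  field_simp
  ring


theorem thermal_entropy_deriv {d : ℕ}
    (H : Matrix (Fin d) (Fin d) ℂ) (hH : H.IsHermitian) (β : ℝ) :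
    HasDerivAt (fun b => entropy (gibbs b H)) (-β * thermalVar H β) β := by
  cases isEmpty_or_nonempty (Fin d) with
  | inl h =>
    have h1 : (fun b : ℝ => entropy (gibbs b H)) = fun _ => 0 := by
      funext b; simp [entropy, Matrix.trace]
    have h2 : thermalVar H β = 0 := by simp [thermalVar, Matrix.trace]
    rw [h1, h2, mul_zero]
    exact hasDerivAt_const β 0
  | inr h =>
    have hfun : (fun b => entropy (gibbs b H)) =
        fun b => b * ((Zf hH b)⁻¹ * Ef hH b) + Real.log (Zf hH b) := by
      funext b
      have hZb := Zf_pos hH b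
      rw [entropy_gibbs hH b]
      have hterm : ∀ i, ((Zf hH b)⁻¹ * Real.exp (-b * hH.eigenvalues i)) *
          Real.log ((Zf hH b)⁻¹ * Real.exp (-b * hH.eigenvalues i)) =
          (-Real.log (Zf hH b) * (Zf hH b)⁻¹) * Real.exp (-b * hH.eigenvalues i)
          + (-b * (Zf hH b)⁻¹) * (hH.eigenvalues i * Real.exp (-b * hH.eigenvalues i)) := by
        intro i
        rw [Real.log_mul (by positivity) (Real.exp_ne_zero _), Real.log_inv, Real.log_exp]
        ring
      rw [Finset.sum_congr rfl (fun i _ => hterm i), Finset.sum_add_distrib,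
        ← Finset.mul_sum, ← Finset.mul_sum,
        show (∑ i, Real.exp (-b * hH.eigenvalues i)) = Zf hH b from rfl,
        show (∑ i, hH.eigenvalues i * Real.exp (-b * hH.eigenvalues i)) = Ef hH b from rfl]
      field_simp
      ring
    rw [hfun]
    have hZne : Zf hH β ≠ 0 := (Zf_pos hH β).ne'
    have hZd := hasDerivAt_Zf hH β
    have hEd := hasDerivAt_Ef hH β
    have hinv : HasDerivAt (fun b => (Zf hH b)⁻¹) (-(-Ef hH β) / (Zf hH β)^2) β :=
      hZd.inv hZne
    have hmul := hinv.mul hEd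
    have h1 := (hasDerivAt_id β).mul hmul
    have hlog := hZd.log hZne
    have htot := h1.add hlog
    convert htot using 1
    case e'_4 => rfl
    case e'_5 => rfl
    case e'_8 => funext b; rfl
    rw [thermalVar_closed hH β, id_eq, Pi.mul_apply]
    field_simp
    ring
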